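/- arXiv:1409.6828 — 2 statements merged into one kernel-verified Lean document; each statement's English description precedes it below -/
import Mathlib

section
/- Let G be a connected simple graph on N ≥ 2 vertices with biased random walk matrix P^B, let (h_v) be a family of hitting-time solutions, and let t be a hidden vertex. Define the potential function φ(x,y) = h_y(x) + h_t(y) − h_y(t). Then any meeting-time solution m' for the modified paired process X' satisfies m'(x,y) ≤ φ(x,y) for all vertices x, y. -/
/-- The biased random walk transition matrix `P^B` of a graph `G` on `Fin N`:
`P^B i j = (1/N)(1/deg i + 1/deg j)` for edges, `P^B i i = 1 - 1/N - ∑_{k ∈ N_i} 1/(N deg k)`,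
and `0` otherwise. -/
noncomputable def PB {N : ℕ} (G : SimpleGraph (Fin N)) [DecidableRel G.Adj]
    (i j : Fin N) : ℝ :=
  if i = j then
    1 - 1 / (N : ℝ) - ∑ k ∈ G.neighborFinset i, 1 / ((N : ℝ) * (G.degree k : ℝ))
  else if G.Adj i j then
    (1 / (N : ℝ)) * (1 / (G.degree i : ℝ) + 1 / (G.degree j : ℝ))
  else 0

section Aux

variable {N : ℕ} (G : SimpleGraph (Fin N)) [DecidableRel G.Adj]

lemma PB_symm (i j : Fin N) : PB G i j = PB G j i := by
  unfold PB
  rcases eq_or_ne i j with rfl | hij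
  · simp
  · rw [if_neg hij, if_neg hij.symm]
    by_cases hadj : G.Adj i j
    · rw [if_pos hadj, if_pos hadj.symm, add_comm]
    · rw [if_neg hadj, if_neg (fun hs => hadj hs.symm)]

lemma PB_apply_adj {i j : Fin N} (hadj : G.Adj i j) :
    PB G i j = (1 / (N : ℝ)) * (1 / (G.degree i : ℝ) + 1 / (G.degree j : ℝ)) := by
  unfold PB
  rw [if_neg hadj.ne, if_pos hadj]

lemma PB_diag (i : Fin N) :
    PB G i i = 1 - 1 / (N : ℝ) - ∑ k ∈ G.neighborFinset i, 1 / ((N : ℝ) * (G.degree k : ℝ)) := by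
  unfold PB
  rw [if_pos rfl]

lemma PB_eq_zero {i j : Fin N} (hne : i ≠ j) (hadj : ¬ G.Adj i j) : PB G i j = 0 := by
  unfold PB
  rw [if_neg hne, if_neg hadj]

lemma PB_adj_nonneg {i j : Fin N} (hadj : G.Adj i j) : 0 ≤ PB G i j := by
  rw [PB_apply_adj G hadj]
  positivity

/-- Splitting a full sum against a row of `PB` into diagonal plus neighbor parts. -/
lemma sum_PB_mul (x : Fin N) (f : Fin N → ℝ) :
    ∑ z, PB G x z * f z = PB G x x * f x + ∑ i ∈ G.neighborFinset x, PB G x i * f i := by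
  classical
  have h1 : ∑ z ∈ insert x (G.neighborFinset x), PB G x z * f z = ∑ z, PB G x z * f z := by
    refine Finset.sum_subset (Finset.subset_univ _) (fun z _ hz => ?_)
    have hzx : x ≠ z := fun hh => hz (by simp [hh])
    have hadj : ¬ G.Adj x z := fun hh => hz (by simp [Finset.mem_insert,
      SimpleGraph.mem_neighborFinset, hh])
    rw [PB_eq_zero G hzx hadj, zero_mul]
  rw [← h1, Finset.sum_insert (SimpleGraph.notMem_neighborFinset_self G x)]

lemma sum_PB_neighbors (hdeg : ∀ v, 0 < G.degree v) (x : Fin N) :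
    ∑ i ∈ G.neighborFinset x, PB G x i
      = 1 / (N : ℝ) + ∑ k ∈ G.neighborFinset x, 1 / ((N : ℝ) * (G.degree k : ℝ)) := by
  have hstep : ∀ i ∈ G.neighborFinset x,
      PB G x i = 1 / ((N : ℝ) * (G.degree x : ℝ)) + 1 / ((N : ℝ) * (G.degree i : ℝ)) := by
    intro i hi
    rw [PB_apply_adj G ((SimpleGraph.mem_neighborFinset G x i).mp hi)]
    rw [mul_add, one_div_mul_one_div, one_div_mul_one_div]
  rw [Finset.sum_congr rfl hstep, Finset.sum_add_distrib, Finset.sum_const,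
    SimpleGraph.card_neighborFinset_eq_degree, nsmul_eq_mul]
  have hdx : (G.degree x : ℝ) ≠ 0 := by
    exact_mod_cast (hdeg x).ne'
  congr 1
  rw [mul_comm ((N : ℝ)) ((G.degree x : ℝ)), div_mul_eq_div_div]
  rw [← mul_div_assoc, mul_one_div, div_self hdx]

lemma PB_diag_eq (hdeg : ∀ v, 0 < G.degree v) (x : Fin N) :
    PB G x x = 1 - ∑ i ∈ G.neighborFinset x, PB G x i := by
  rw [PB_diag, sum_PB_neighbors G hdeg]
  ring

lemma PB_row_sum (hdeg : ∀ v, 0 < G.degree v) (x : Fin N) :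
    ∑ z, PB G x z = 1 := by
  have := sum_PB_mul G x (fun _ => 1)
  simp only [mul_one] at this
  rw [this, PB_diag_eq G hdeg]
  ring

lemma PB_col_sum (hdeg : ∀ v, 0 < G.degree v) (z : Fin N) :
    ∑ x, PB G x z = 1 := by
  have : ∀ x, PB G x z = PB G z x := fun x => PB_symm G x z
  rw [Finset.sum_congr rfl (fun x _ => this x)]
  exact PB_row_sum G hdeg z

/-- Return-time identity: `∑_z P^B(y,z) h_y(z) = N - 1`. -/
lemma return_identity (hN : 2 ≤ N) (hdeg : ∀ v, 0 < G.degree v)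
    (h : Fin N → Fin N → ℝ) (h0 : ∀ v, h v v = 0)
    (hrec : ∀ v x, x ≠ v → h v x = 1 + ∑ z, PB G x z * h v z) (y : Fin N) :
    ∑ z, PB G y z * h y z = (N : ℝ) - 1 := by
  classical
  have hcard : (Finset.univ.erase y).card = N - 1 := by
    rw [Finset.card_erase_of_mem (Finset.mem_univ y), Finset.card_univ, Fintype.card_fin]
  have hS : ∑ x, h y x = ∑ x ∈ Finset.univ.erase y, h y x :=
    (Finset.sum_erase _ (h0 y)).symm
  have hS2 : ∑ x ∈ Finset.univ.erase y, h y x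
      = ∑ x ∈ Finset.univ.erase y, (1 + ∑ z, PB G x z * h y z) := by
    refine Finset.sum_congr rfl (fun x hx => ?_)
    exact hrec y x (Finset.ne_of_mem_erase hx)
  have hS3 : ∑ x ∈ Finset.univ.erase y, (1 + ∑ z, PB G x z * h y z)
      = ((N : ℝ) - 1) + ((∑ x, ∑ z, PB G x z * h y z) - ∑ z, PB G y z * h y z) := by
    rw [Finset.sum_add_distrib, Finset.sum_const, hcard, nsmul_eq_mul, mul_one]
    have hNcast : ((N - 1 : ℕ) : ℝ) = (N : ℝ) - 1 := by
      have : 1 ≤ N := le_trans (by norm_num) hN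
      push_cast [Nat.cast_sub this]
      ring
    rw [hNcast]
    congr 1
    rw [Finset.sum_erase_eq_sub (Finset.mem_univ y)]
  have hdouble : ∑ x, ∑ z, PB G x z * h y z = ∑ x, h y x := by
    rw [Finset.sum_comm]
    refine Finset.sum_congr rfl (fun z _ => ?_)
    rw [← Finset.sum_mul, PB_col_sum G hdeg z, one_mul]
  have := hS.trans (hS2.trans hS3)
  rw [hdouble] at this
  linarith

/-- The discrete "Laplacian" of the hitting-time solution. -/
lemma Lhit (hN : 2 ≤ N) (hdeg : ∀ v, 0 < G.degree v)
    (h : Fin N → Fin N → ℝ) (h0 : ∀ v, h v v = 0)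
    (hrec : ∀ v x, x ≠ v → h v x = 1 + ∑ z, PB G x z * h v z) (v z : Fin N) :
    h v z - ∑ k, PB G z k * h v k = if z = v then 1 - (N : ℝ) else 1 := by
  rcases eq_or_ne z v with rfl | hzv
  · rw [if_pos rfl, h0, return_identity G hN hdeg h h0 hrec z]
    ring
  · rw [if_neg hzv, hrec v z hzv]
    ring

/-- Green's symmetry identity for a symmetric kernel. -/
lemma green (P : Fin N → Fin N → ℝ) (hP : ∀ i j, P i j = P j i) (u w : Fin N → ℝ) :
    ∑ z, u z * (w z - ∑ k, P z k * w k) = ∑ z, w z * (u z - ∑ k, P z k * u k) := by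
  simp only [mul_sub, Finset.sum_sub_distrib, Finset.mul_sum]
  have h1 : ∑ z, u z * w z = ∑ z, w z * u z := by
    exact Finset.sum_congr rfl (fun z _ => mul_comm _ _)
  have h2 : ∑ z, ∑ k, u z * (P z k * w k) = ∑ z, ∑ k, w z * (P z k * u k) := by
    rw [Finset.sum_comm]
    refine Finset.sum_congr rfl (fun z _ => Finset.sum_congr rfl (fun k _ => ?_))
    rw [hP k z]
    ring
  rw [h1, h2]

/-- The cyclic tour identity for hitting times of the (reversible) biased walk. -/
lemma cycle_identity (hN : 2 ≤ N) (hdeg : ∀ v, 0 < G.degree v)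
    (h : Fin N → Fin N → ℝ) (h0 : ∀ v, h v v = 0)
    (hrec : ∀ v x, x ≠ v → h v x = 1 + ∑ z, PB G x z * h v z) (t x y : Fin N) :
    h y x + h x t + h t y = h x y + h y t + h t x := by
  rcases eq_or_ne x y with rfl | hxy
  · ring
  rcases eq_or_ne x t with rfl | hxt
  · ring
  rcases eq_or_ne y t with rfl | hyt
  · ring
  set u : Fin N → ℝ := fun z => h y z - h x z with hu
  set w : Fin N → ℝ := fun z => h t z - h x z with hw
  have hg := green (PB G) (PB_symm G) u w
  have expand : ∀ (a b : Fin N → ℝ) (z : Fin N),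
      (a z - b z) - ∑ k, PB G z k * (a k - b k)
        = (a z - ∑ k, PB G z k * a k) - (b z - ∑ k, PB G z k * b k) := by
    intro a b z
    simp only [mul_sub, Finset.sum_sub_distrib]
    ring
  have hLw : ∀ z, w z - ∑ k, PB G z k * w k
      = (if z = t then 1 - (N : ℝ) else 1) - (if z = x then 1 - (N : ℝ) else 1) := by
    intro z
    rw [hw]
    rw [expand (fun z => h t z) (fun z => h x z) z,
      Lhit G hN hdeg h h0 hrec t z, Lhit G hN hdeg h h0 hrec x z]
  have hLu : ∀ z, u z - ∑ k, PB G z k * u k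
      = (if z = y then 1 - (N : ℝ) else 1) - (if z = x then 1 - (N : ℝ) else 1) := by
    intro z
    rw [hu]
    rw [expand (fun z => h y z) (fun z => h x z) z,
      Lhit G hN hdeg h h0 hrec y z, Lhit G hN hdeg h h0 hrec x z]
  have hLHS : ∑ z, u z * (w z - ∑ k, PB G z k * w k) = (N : ℝ) * u x - (N : ℝ) * u t := by
    have hform : ∀ z, u z * ((if z = t then 1 - (N : ℝ) else 1) - (if z = x then 1 - (N : ℝ) else 1))
        = (N : ℝ) * (if z = x then u z else 0) - (N : ℝ) * (if z = t then u z else 0) := by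
      intro z
      split_ifs with h1 h2 h2
      · exact absurd (h2.symm.trans h1) hxt
      all_goals ring
    calc ∑ z, u z * (w z - ∑ k, PB G z k * w k)
        = ∑ z, ((N : ℝ) * (if z = x then u z else 0) - (N : ℝ) * (if z = t then u z else 0)) := by
          refine Finset.sum_congr rfl (fun z _ => ?_)
          rw [hLw z, hform z]
      _ = (N : ℝ) * u x - (N : ℝ) * u t := by
          rw [Finset.sum_sub_distrib, ← Finset.mul_sum, ← Finset.mul_sum,
            Finset.sum_ite_eq' Finset.univ x u, Finset.sum_ite_eq' Finset.univ t u]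
          simp
  have hRHS : ∑ z, w z * (u z - ∑ k, PB G z k * u k) = (N : ℝ) * w x - (N : ℝ) * w y := by
    have hform : ∀ z, w z * ((if z = y then 1 - (N : ℝ) else 1) - (if z = x then 1 - (N : ℝ) else 1))
        = (N : ℝ) * (if z = x then w z else 0) - (N : ℝ) * (if z = y then w z else 0) := by
      intro z
      split_ifs with h1 h2 h2
      · exact absurd (h2.symm.trans h1) hxy
      all_goals ring
    calc ∑ z, w z * (u z - ∑ k, PB G z k * u k)
        = ∑ z, ((N : ℝ) * (if z = x then w z else 0) - (N : ℝ) * (if z = y then w z else 0)) := by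
          refine Finset.sum_congr rfl (fun z _ => ?_)
          rw [hLu z, hform z]
      _ = (N : ℝ) * w x - (N : ℝ) * w y := by
          rw [Finset.sum_sub_distrib, ← Finset.mul_sum, ← Finset.mul_sum,
            Finset.sum_ite_eq' Finset.univ x w, Finset.sum_ite_eq' Finset.univ y w]
          simp
  rw [hLHS, hRHS] at hg
  have hNpos : (0 : ℝ) < N := by
    have : (0 : ℕ) < N := lt_of_lt_of_le (by norm_num) hN
    exact_mod_cast this
  have hux : u x = h y x := by rw [hu]; simp [h0]
  have hut : u t = h y t - h x t := rfl
  have hwx : w x = h t x := by rw [hw]; simp [h0]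
  have hwy : w y = h t y - h x y := rfl
  rw [hux, hut, hwx, hwy] at hg
  have := mul_left_cancel₀ hNpos.ne' (by linear_combination hg :
    (N : ℝ) * (h y x - (h y t - h x t)) = (N : ℝ) * (h t x - (h t y - h x y)))
  linarith

/-- Neighbor-sum form of the hitting-time recurrence. -/
lemma nb_rec (hdeg : ∀ v, 0 < G.degree v)
    (h : Fin N → Fin N → ℝ)
    (hrec : ∀ v x, x ≠ v → h v x = 1 + ∑ z, PB G x z * h v z)
    {x v : Fin N} (hxv : x ≠ v) :
    (∑ i ∈ G.neighborFinset x, PB G x i) * h v x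
      = 1 + ∑ i ∈ G.neighborFinset x, PB G x i * h v i := by
  have h1 := hrec v x hxv
  rw [sum_PB_mul G x (h v), PB_diag_eq G hdeg x] at h1
  linear_combination h1

end Aux

/-- let `h` be a family of hitting-time solutions of the biased random walk
(`h v u = H(u, v)`), let `t` be a hidden vertex, and let
`φ(x,y) = h_y(x) + h_t(y) − h_y(t)`. Then any meeting-time solution `m'` for the
modified paired process `X'` satisfies `m' x y ≤ φ(x,y)` for all vertices `x, y`. -/
theorem meeting_time_modified_le_potential {N : ℕ} (hN : 2 ≤ N)
    (G : SimpleGraph (Fin N)) [DecidableRel G.Adj] (hconn : G.Connected)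
    (h : Fin N → Fin N → ℝ) (h0 : ∀ v, h v v = 0)
    (hrec : ∀ v x, x ≠ v → h v x = 1 + ∑ z, PB G x z * h v z)
    (t : Fin N) (ht : ∀ v, h v t ≤ h t v)
    (m' : Fin N → Fin N → ℝ)
    (hsym : ∀ x y, m' x y = m' y x) (hdiag : ∀ x, m' x x = 0)
    (hm : ∀ x y, x ≠ y →
      ((∑ i ∈ G.neighborFinset x, PB G x i) + (∑ j ∈ G.neighborFinset y, PB G y j))
          * m' x y
        = 1 + (∑ i ∈ G.neighborFinset x, PB G x i * m' i y)
            + (∑ j ∈ G.neighborFinset y, PB G y j * m' x j)) :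
    ∀ x y, m' x y ≤ h y x + h t y - h y t := by
  classical
  have hdeg : ∀ v, 0 < G.degree v := by
    intro v
    rw [SimpleGraph.degree_pos_iff_exists_adj]
    have : Nontrivial (Fin N) := Fin.nontrivial_iff_two_le.mpr hN
    obtain ⟨w, hw⟩ := exists_ne v
    obtain ⟨p⟩ := hconn.preconnected v w
    cases p with
    | nil => exact absurd rfl hw.symm
    | cons hadj _ => exact ⟨_, hadj⟩
  intro x y
  set φ : Fin N → Fin N → ℝ := fun a b => h b a + h t b - h b t with hφ
  have hφsymm : ∀ a b, φ a b = φ b a := by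
    intro a b
    have := cycle_identity G hN hdeg h h0 hrec t a b
    simp only [hφ]
    linarith
  obtain ⟨p, -, hp⟩ := Finset.exists_max_image (Finset.univ : Finset (Fin N × Fin N))
    (fun q => m' q.1 q.2 - φ q.1 q.2) ⟨(x, y), Finset.mem_univ _⟩
  set K : ℝ := m' p.1 p.2 - φ p.1 p.2 with hK
  have hKmax : ∀ a b, m' a b - φ a b ≤ K := fun a b => hp (a, b) (Finset.mem_univ _)
  have hKnonpos : K ≤ 0 := by
    rcases eq_or_ne p.1 p.2 with he | hne
    · have h1 := ht p.2
      have : K = m' p.2 p.2 - φ p.2 p.2 := by rw [hK, he]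
      rw [this, hdiag p.2] at *
      simp only [hφ, h0] at this ⊢
      linarith
    · exfalso
      set a := p.1
      set b := p.2
      have hmab := hm a b hne
      set Qa : ℝ := ∑ i ∈ G.neighborFinset a, PB G a i with hQa
      set Qb : ℝ := ∑ j ∈ G.neighborFinset b, PB G b j with hQb
      -- exact value of the φ-averages
      have hA : ∑ i ∈ G.neighborFinset a, PB G a i * φ i b = Qa * φ a b - 1 := by
        have hsplit : ∀ i, φ i b = h b i + (h t b - h b t) := fun i => by
          simp only [hφ]; ring
        calc ∑ i ∈ G.neighborFinset a, PB G a i * φ i b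
            = (∑ i ∈ G.neighborFinset a, PB G a i * h b i) + Qa * (h t b - h b t) := by
              rw [hQa, Finset.sum_mul]
              rw [← Finset.sum_add_distrib]
              refine Finset.sum_congr rfl (fun i _ => ?_)
              rw [hsplit i]; ring
          _ = Qa * φ a b - 1 := by
              have := nb_rec G hdeg h hrec (v := b) (x := a) hne
              rw [← hQa] at this
              simp only [hφ]
              linarith
      have hB : ∑ j ∈ G.neighborFinset b, PB G b j * φ a j = Qb * φ a b - 1 := by
        have hsplit : ∀ j, φ a j = h a j + (h t a - h a t) := fun j => by
          rw [hφsymm a j]; simp only [hφ]; ring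
        calc ∑ j ∈ G.neighborFinset b, PB G b j * φ a j
            = (∑ j ∈ G.neighborFinset b, PB G b j * h a j) + Qb * (h t a - h a t) := by
              rw [hQb, Finset.sum_mul]
              rw [← Finset.sum_add_distrib]
              refine Finset.sum_congr rfl (fun j _ => ?_)
              rw [hsplit j]; ring
          _ = Qb * φ a b - 1 := by
              have := nb_rec G hdeg h hrec (v := a) (x := b) hne.symm
              rw [← hQb] at this
              have hsy := hφsymm a b
              simp only [hφ] at hsy ⊢
              linear_combination (-1 : ℝ) * this - Qb * hsy
      -- upper bounds on the m'-averages
      have h1 : ∑ i ∈ G.neighborFinset a, PB G a i * m' i b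
          ≤ ∑ i ∈ G.neighborFinset a, PB G a i * (φ i b + K) := by
        refine Finset.sum_le_sum (fun i hi => ?_)
        have hnn := PB_adj_nonneg G ((SimpleGraph.mem_neighborFinset G a i).mp hi)
        have := hKmax i b
        nlinarith
      have h2 : ∑ j ∈ G.neighborFinset b, PB G b j * m' a j
          ≤ ∑ j ∈ G.neighborFinset b, PB G b j * (φ a j + K) := by
        refine Finset.sum_le_sum (fun j hj => ?_)
        have hnn := PB_adj_nonneg G ((SimpleGraph.mem_neighborFinset G b j).mp hj)
        have := hKmax a j
        nlinarith
      have h1' : ∑ i ∈ G.neighborFinset a, PB G a i * (φ i b + K)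
          = Qa * φ a b - 1 + Qa * K := by
        rw [← hA, hQa, Finset.sum_mul, ← Finset.sum_add_distrib]
        refine Finset.sum_congr rfl (fun i _ => ?_)
        ring
      have h2' : ∑ j ∈ G.neighborFinset b, PB G b j * (φ a j + K)
          = Qb * φ a b - 1 + Qb * K := by
        rw [← hB, hQb, Finset.sum_mul, ← Finset.sum_add_distrib]
        refine Finset.sum_congr rfl (fun j _ => ?_)
        ring
      have hmK : m' a b = φ a b + K := by rw [hK]; ring
      rw [hmK] at hmab
      rw [h1'] at h1
      rw [h2'] at h2
      nlinarith [hmab, h1, h2]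
  have := hKmax x y
  simp only [hφ] at this
  linarith
end

section
/- (Claim 2 in the proof of Lemma 4) Let G be a connected simple graph on N ≥ 2 vertices with biased random walk matrix P^B. If m is a meeting-time solution for the paired process X and m' is a meeting-time solution for the modified paired process X', then max_{x,y} m(x,y) ≤ 2 · max_{x,y} m'(x,y); that is, the meeting time of X is at most twice the meeting time of X'. -/
lemma PB_pos {N : ℕ} (G : SimpleGraph (Fin N)) [DecidableRel G.Adj]
    {a i : Fin N} (h : G.Adj a i) (hN : 0 < N) : 0 < PB G a i := by
  have hne : a ≠ i := G.ne_of_adj h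
  have hda : 0 < G.degree a := (G.degree_pos_iff_exists_adj a).2 ⟨i, h⟩
  have hdi : 0 < G.degree i := (G.degree_pos_iff_exists_adj i).2 ⟨a, h.symm⟩
  unfold PB
  rw [if_neg hne, if_pos h]
  have h1 : (0:ℝ) < (N:ℝ) := by exact_mod_cast hN
  have h2 : (0:ℝ) < (G.degree a : ℝ) := by exact_mod_cast hda
  have h3 : (0:ℝ) < (G.degree i : ℝ) := by exact_mod_cast hdi
  positivity

lemma PB_symm_s10 {N : ℕ} (G : SimpleGraph (Fin N)) [DecidableRel G.Adj]
    (a b : Fin N) : PB G a b = PB G b a := by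
  unfold PB
  by_cases h : a = b
  · subst h; simp
  · rw [if_neg h, if_neg (Ne.symm h)]
    by_cases hadj : G.Adj a b
    · rw [if_pos hadj, if_pos hadj.symm]; ring
    · rw [if_neg hadj, if_neg (fun hc => hadj hc.symm)]

/-- Claim 2 in the proof of Lemma 4: for a connected simple graph on
`N ≥ 2` vertices, if `m` is a meeting-time solution for the paired process `X` and
`m'` is a meeting-time solution for the modified paired process `X'`, then
`max_{x,y} m x y ≤ 2 · max_{x,y} m' x y`. -/
theorem meeting_time_le_two_modified {N : ℕ} (hN : 2 ≤ N)
    (G : SimpleGraph (Fin N)) [DecidableRel G.Adj] (hconn : G.Connected)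
    (m : Fin N → Fin N → ℝ)
    (hsymX : ∀ x y, m x y = m y x) (hdiagX : ∀ x, m x x = 0)
    (hmX : ∀ x y, x ≠ y →
      ((∑ i ∈ G.neighborFinset x, PB G x i) + (∑ j ∈ G.neighborFinset y, PB G y j)
          - PB G x y) * m x y
        = 1 + (∑ i ∈ (G.neighborFinset x).erase y, PB G x i * m i y)
            + (∑ j ∈ (G.neighborFinset y).erase x, PB G y j * m x j))
    (m' : Fin N → Fin N → ℝ)
    (hsym : ∀ x y, m' x y = m' y x) (hdiag : ∀ x, m' x x = 0)
    (hm : ∀ x y, x ≠ y →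
      ((∑ i ∈ G.neighborFinset x, PB G x i) + (∑ j ∈ G.neighborFinset y, PB G y j))
          * m' x y
        = 1 + (∑ i ∈ G.neighborFinset x, PB G x i * m' i y)
            + (∑ j ∈ G.neighborFinset y, PB G y j * m' x j)) :
    ∀ x y, m x y ≤
      2 * Finset.univ.sup' ⟨(x, y), Finset.mem_univ _⟩
        (fun p : Fin N × Fin N => m' p.1 p.2) := by
  classical
  have hN0 : 0 < N := lt_of_lt_of_le (by norm_num) hN
  have hne : (Finset.univ : Finset (Fin N × Fin N)).Nonempty := by
    refine ⟨(⟨0, hN0⟩, ⟨0, hN0⟩), Finset.mem_univ _⟩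
  set M' : ℝ := Finset.univ.sup' hne (fun p : Fin N × Fin N => m' p.1 p.2) with hM'def
  set U : ℝ := Finset.univ.sup' hne (fun p : Fin N × Fin N => m p.1 p.2 - m' p.1 p.2)
    with hUdef
  have hM'le : ∀ a b : Fin N, m' a b ≤ M' := fun a b =>
    Finset.le_sup' (fun p : Fin N × Fin N => m' p.1 p.2) (Finset.mem_univ (a, b))
  have hUle : ∀ a b : Fin N, m a b - m' a b ≤ U := fun a b =>
    Finset.le_sup' (fun p : Fin N × Fin N => m p.1 p.2 - m' p.1 p.2)
      (Finset.mem_univ (a, b))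
  have hM'0 : (0:ℝ) ≤ M' := by
    have := hM'le ⟨0, hN0⟩ ⟨0, hN0⟩
    rwa [hdiag] at this
  -- full-sum versions of the two functional equations, and the subtracted equation
  have hPBnn : ∀ {a b : Fin N}, b ∈ G.neighborFinset a → 0 ≤ PB G a b := by
    intro a b hb
    exact le_of_lt (PB_pos G ((G.mem_neighborFinset a b).1 hb) hN0)
  have hsub : ∀ a b : Fin N, a ≠ b →
      ((∑ i ∈ G.neighborFinset a, PB G a i) + (∑ j ∈ G.neighborFinset b, PB G b j))
          * (m a b - m' a b) - PB G a b * m a b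
        = (∑ i ∈ G.neighborFinset a, PB G a i * (m i b - m' i b))
            + (∑ j ∈ G.neighborFinset b, PB G b j * (m a j - m' a j)) := by
    intro a b hab
    have e1 : (∑ i ∈ (G.neighborFinset a).erase b, PB G a i * m i b)
        = ∑ i ∈ G.neighborFinset a, PB G a i * m i b :=
      Finset.sum_erase _ (by rw [hdiagX b, mul_zero])
    have e2 : (∑ j ∈ (G.neighborFinset b).erase a, PB G b j * m a j)
        = ∑ j ∈ G.neighborFinset b, PB G b j * m a j :=
      Finset.sum_erase _ (by rw [hdiagX a, mul_zero])
    have h1 := hmX a b hab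
    rw [e1, e2] at h1
    have h2 := hm a b hab
    have hs1 : (∑ i ∈ G.neighborFinset a, PB G a i * (m i b - m' i b))
        = (∑ i ∈ G.neighborFinset a, PB G a i * m i b)
          - (∑ i ∈ G.neighborFinset a, PB G a i * m' i b) := by
      rw [← Finset.sum_sub_distrib]; exact Finset.sum_congr rfl (fun i _ => mul_sub _ _ _)
    have hs2 : (∑ j ∈ G.neighborFinset b, PB G b j * (m a j - m' a j))
        = (∑ j ∈ G.neighborFinset b, PB G b j * m a j)
          - (∑ j ∈ G.neighborFinset b, PB G b j * m' a j) := by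
      rw [← Finset.sum_sub_distrib]; exact Finset.sum_congr rfl (fun j _ => mul_sub _ _ _)
    rw [hs1, hs2]
    linear_combination h1 - h2
  -- adjacent maximizer case
  have hadjcase : ∀ a b : Fin N, G.Adj a b → m a b - m' a b = U → U ≤ M' := by
    intro a b hadj hE
    have hab : a ≠ b := G.ne_of_adj hadj
    have hbmem : b ∈ G.neighborFinset a := (G.mem_neighborFinset a b).2 hadj
    have hamem : a ∈ G.neighborFinset b := (G.mem_neighborFinset b a).2 hadj.symm
    have hP : 0 < PB G a b := PB_pos G hadj hN0
    have hsum1 : (∑ i ∈ G.neighborFinset a, PB G a i * (m i b - m' i b))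
        ≤ ((∑ i ∈ G.neighborFinset a, PB G a i) - PB G a b) * U := by
      have hz : PB G a b * (m b b - m' b b) = 0 := by rw [hdiagX, hdiag]; ring
      rw [← Finset.sum_erase (G.neighborFinset a)
        (f := fun i => PB G a i * (m i b - m' i b)) hz]
      have hws : (∑ i ∈ (G.neighborFinset a).erase b, PB G a i)
          = (∑ i ∈ G.neighborFinset a, PB G a i) - PB G a b := by
        have := Finset.add_sum_erase (G.neighborFinset a) (fun i => PB G a i) hbmem
        linarith
      calc (∑ i ∈ (G.neighborFinset a).erase b, PB G a i * (m i b - m' i b))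
          ≤ ∑ i ∈ (G.neighborFinset a).erase b, PB G a i * U := by
            refine Finset.sum_le_sum (fun i hi => ?_)
            exact mul_le_mul_of_nonneg_left (hUle i b)
              (hPBnn (Finset.mem_of_mem_erase hi))
        _ = ((∑ i ∈ G.neighborFinset a, PB G a i) - PB G a b) * U := by
            rw [← Finset.sum_mul, hws]
    have hsum2 : (∑ j ∈ G.neighborFinset b, PB G b j * (m a j - m' a j))
        ≤ ((∑ j ∈ G.neighborFinset b, PB G b j) - PB G a b) * U := by
      have hz : PB G b a * (m a a - m' a a) = 0 := by rw [hdiagX, hdiag]; ring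
      rw [← Finset.sum_erase (G.neighborFinset b)
        (f := fun j => PB G b j * (m a j - m' a j)) hz]
      have hws : (∑ j ∈ (G.neighborFinset b).erase a, PB G b j)
          = (∑ j ∈ G.neighborFinset b, PB G b j) - PB G a b := by
        have := Finset.add_sum_erase (G.neighborFinset b) (fun j => PB G b j) hamem
        rw [PB_symm_s10 G a b]
        linarith
      calc (∑ j ∈ (G.neighborFinset b).erase a, PB G b j * (m a j - m' a j))
          ≤ ∑ j ∈ (G.neighborFinset b).erase a, PB G b j * U := by
            refine Finset.sum_le_sum (fun j hj => ?_)
            exact mul_le_mul_of_nonneg_left (hUle a j)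
              (hPBnn (Finset.mem_of_mem_erase hj))
        _ = ((∑ j ∈ G.neighborFinset b, PB G b j) - PB G a b) * U := by
            rw [← Finset.sum_mul, hws]
    have heq := hsub a b hab
    rw [hE] at heq
    -- m a b = U + m' a b
    have hmab : m a b = U + m' a b := by
      have := hUle a b
      linarith [hE]
    have hUm' : U ≤ m' a b := by
      nlinarith [heq, hsum1, hsum2, hmab, hP]
    exact le_trans hUm' (hM'le a b)
  -- key induction on distance
  have key : ∀ n : ℕ, ∀ a b : Fin N, G.dist a b ≤ n → m a b - m' a b = U → U ≤ M' := by
    intro n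
    induction n with
    | zero =>
      intro a b hd hE
      have hd0 : G.dist a b = 0 := Nat.le_zero.mp hd
      have hab : a = b := by
        rcases SimpleGraph.dist_eq_zero_iff_eq_or_not_reachable.mp hd0 with h | h
        · exact h
        · exact absurd (hconn.preconnected a b) h
      subst hab
      rw [hdiagX, hdiag] at hE
      linarith
    | succ n ih =>
      intro a b hd hE
      by_cases hab : a = b
      · subst hab
        rw [hdiagX, hdiag] at hE
        linarith
      by_cases hadj : G.Adj a b
      · exact hadjcase a b hadj hE
      -- non-adjacent case: PB a b = 0
      have hP0 : PB G a b = 0 := by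
        unfold PB; rw [if_neg hab, if_neg hadj]
      have heq := hsub a b hab
      rw [hE, hP0] at heq
      have ex1 : (∑ i ∈ G.neighborFinset a, PB G a i * (U - (m i b - m' i b)))
          = (∑ i ∈ G.neighborFinset a, PB G a i) * U
            - (∑ i ∈ G.neighborFinset a, PB G a i * (m i b - m' i b)) := by
        simp only [mul_sub]
        rw [Finset.sum_sub_distrib, ← Finset.sum_mul]
      have ex2 : (∑ j ∈ G.neighborFinset b, PB G b j * (U - (m a j - m' a j)))
          = (∑ j ∈ G.neighborFinset b, PB G b j) * U
            - (∑ j ∈ G.neighborFinset b, PB G b j * (m a j - m' a j)) := by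
        simp only [mul_sub]
        rw [Finset.sum_sub_distrib, ← Finset.sum_mul]
      have hzero : (∑ i ∈ G.neighborFinset a, PB G a i * (U - (m i b - m' i b)))
          + (∑ j ∈ G.neighborFinset b, PB G b j * (U - (m a j - m' a j))) = 0 := by
        rw [ex1, ex2]; linarith
      have hnn1 : ∀ i ∈ G.neighborFinset a, 0 ≤ PB G a i * (U - (m i b - m' i b)) :=
        fun i hi => mul_nonneg (hPBnn hi) (by linarith [hUle i b])
      have hnn2 : ∀ j ∈ G.neighborFinset b, 0 ≤ PB G b j * (U - (m a j - m' a j)) :=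
        fun j hj => mul_nonneg (hPBnn hj) (by linarith [hUle a j])
      have hz1 : (∑ i ∈ G.neighborFinset a, PB G a i * (U - (m i b - m' i b))) = 0 := by
        have hle1 := Finset.sum_nonneg hnn1
        have hle2 := Finset.sum_nonneg hnn2
        linarith
      have hterm : ∀ i ∈ G.neighborFinset a, m i b - m' i b = U := by
        intro i hi
        have := (Finset.sum_eq_zero_iff_of_nonneg hnn1).mp hz1 i hi
        have hPi : 0 < PB G a i := PB_pos G ((G.mem_neighborFinset a i).1 hi) hN0
        have : U - (m i b - m' i b) = 0 := by
          rcases mul_eq_zero.mp this with h | h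
          · exact absurd h (ne_of_gt hPi)
          · exact h
        linarith
      -- find neighbor on a geodesic
      have hdne : G.dist a b ≠ 0 :=
        SimpleGraph.dist_ne_zero_iff_ne_and_reachable.mpr ⟨hab, hconn.preconnected a b⟩
      obtain ⟨p, hp⟩ := SimpleGraph.exists_walk_of_dist_ne_zero hdne
      cases p with
      | nil => exact absurd rfl hab
      | @cons _ c _ h q =>
        have hlen : q.length + 1 = G.dist a b := by simpa using hp
        have hqd : G.dist c b ≤ n := by
          have := SimpleGraph.dist_le q
          omega
        exact ih c b hqd (hterm c ((G.mem_neighborFinset a c).2 h))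
  -- conclude
  intro x y
  obtain ⟨p, -, hpeq⟩ := Finset.exists_mem_eq_sup' hne
    (fun p : Fin N × Fin N => m p.1 p.2 - m' p.1 p.2)
  have hUM' : U ≤ M' := key (G.dist p.1 p.2) p.1 p.2 le_rfl hpeq.symm
  have h1 : m x y - m' x y ≤ U := hUle x y
  have h2 : m' x y ≤ M' := hM'le x y
  show m x y ≤ 2 * M'
  linarith
end
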